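/- Let y ∈ L¹([0,a]) and α ≥ 1. Then I^α y is absolutely continuous on [0,a]. -/

import Mathlib

open MeasureTheory Set ENNReal

/-- Riemann–Liouville fractional integral of order `α`. -/
noncomputable def fracInt (α : ℝ) (y : ℝ → ℝ) (t : ℝ) : ℝ :=
  (1 / Real.Gamma α) * ∫ x in (0:ℝ)..t, (t - x) ^ (α - 1) * y x

/-- Absolute continuity of a function on `[A,B]` in the standard ε–δ sense. -/
def AbsolutelyContinuousOnI (f : ℝ → ℝ) (A B : ℝ) : Prop :=
  ∀ ε > (0:ℝ), ∃ δ > (0:ℝ), ∀ (n : ℕ) (s t : Fin n → ℝ),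
    (∀ i, A ≤ s i ∧ s i ≤ t i ∧ t i ≤ B) →
    (∀ i j, i ≠ j → Disjoint (Set.Ioo (s i) (t i)) (Set.Ioo (s j) (t j))) →
    (∑ i, (t i - s i)) < δ → (∑ i, |f (t i) - f (s i)|) < ε

/-- The indefinite integral of an `L¹` function is absolutely continuous. -/
lemma lemmaA (a : ℝ) (G f : ℝ → ℝ) (hG : IntegrableOn G (Icc 0 a) volume)
    (hf : ∀ t ∈ Icc (0:ℝ) a, f t = ∫ x in (0:ℝ)..t, G x) :
    AbsolutelyContinuousOnI f 0 a := by
  intro ε hε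
  set ν := volume.restrict (Icc (0:ℝ) a) with hν
  have hGν : Integrable G ν := hG
  have hGfin : ∫⁻ x, ‖G x‖₊ ∂ν ≠ ∞ := hGν.2.ne
  obtain ⟨δ, hδ0, hδ⟩ := exists_pos_setLIntegral_lt_of_measure_lt hGfin
    (ε := ENNReal.ofReal ε) (by simp [hε])
  obtain ⟨r, hr0, hrδ⟩ := ENNReal.lt_iff_exists_nnreal_btwn.mp hδ0
  have hr0' : (0:ℝ) < r := by exact_mod_cast hr0
  refine ⟨r, hr0', ?_⟩
  intro n s t hst hd hsum
  have hsub : ∀ i, Ioc (s i) (t i) ⊆ Icc (0:ℝ) a := fun i x hx =>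
    ⟨le_trans (hst i).1 hx.1.le, le_trans hx.2 (hst i).2.2⟩
  set L : Fin n → ℝ≥0∞ := fun i => ∫⁻ x in Ioo (s i) (t i), ‖G x‖₊ ∂ν with hL
  have key : ∀ i, |f (t i) - f (s i)| ≤ (L i).toReal := by
    intro i
    obtain ⟨h0s, hstle, hta⟩ := hst i
    have hii : ∀ b, 0 ≤ b → b ≤ a → IntervalIntegrable G volume 0 b := by
      intro b hb0 hba
      apply IntegrableOn.intervalIntegrable
      rw [uIcc_of_le hb0]
      exact hG.mono_set (Icc_subset_Icc le_rfl hba)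
    have h1 : f (t i) - f (s i) = ∫ x in (s i)..(t i), G x := by
      rw [hf _ ⟨le_trans h0s hstle, hta⟩, hf _ ⟨h0s, le_trans hstle hta⟩,
        ← intervalIntegral.integral_interval_sub_left
          (hii _ (le_trans h0s hstle) hta) (hii _ h0s (le_trans hstle hta))]
    have h2 : volume.restrict (Ioc (s i) (t i)) = ν.restrict (Ioc (s i) (t i)) := by
      rw [hν, Measure.restrict_restrict measurableSet_Ioc,
        inter_eq_left.mpr (hsub i)]
    have h3 : |f (t i) - f (s i)| ≤ (∫⁻ x in Ioc (s i) (t i), ‖G x‖₊ ∂ν).toReal := by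
      rw [h1, intervalIntegral.integral_of_le hstle]
      calc |∫ x in Ioc (s i) (t i), G x| = ‖∫ x, G x ∂(ν.restrict (Ioc (s i) (t i)))‖ := by
            rw [← h2]; rfl
        _ ≤ (∫⁻ x, ENNReal.ofReal ‖G x‖ ∂(ν.restrict (Ioc (s i) (t i)))).toReal :=
            norm_integral_le_lintegral_norm _
        _ = (∫⁻ x in Ioc (s i) (t i), ‖G x‖₊ ∂ν).toReal := by
            simp_rw [_root_.ofReal_norm, enorm_eq_nnnorm]
    have h4 : (∫⁻ x in Ioc (s i) (t i), ‖G x‖₊ ∂ν) = L i := by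
      refine (setLIntegral_congr ?_).symm
      exact (Ioo_ae_eq_Ioc (μ := volume)).filter_mono (ae_mono Measure.restrict_le_self)
    rw [← h4]; exact h3
  have hLfin : ∀ i ∈ Finset.univ, L i ≠ ∞ := by
    intro i _
    exact (lt_of_le_of_lt (setLIntegral_le_lintegral _ _) hGν.2).ne
  have hdisj' : Set.PairwiseDisjoint (↑(Finset.univ : Finset (Fin n)))
      (fun i => Ioo (s i) (t i)) := fun i _ j _ hij => hd i j hij
  have hsum' : ∑ i, L i = ∫⁻ x in ⋃ i ∈ Finset.univ, Ioo (s i) (t i), ‖G x‖₊ ∂ν :=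
    (lintegral_biUnion_finset hdisj' (fun _ _ => measurableSet_Ioo) _).symm
  have hUmeas : ν (⋃ i ∈ Finset.univ, Ioo (s i) (t i)) < δ := by
    calc ν (⋃ i ∈ Finset.univ, Ioo (s i) (t i))
        ≤ volume (⋃ i ∈ Finset.univ, Ioo (s i) (t i)) := Measure.restrict_apply_le _ _
      _ ≤ ∑ i, volume (Ioo (s i) (t i)) := measure_biUnion_finset_le _ _
      _ = ∑ i, ENNReal.ofReal (t i - s i) := by simp [Real.volume_Ioo]
      _ = ENNReal.ofReal (∑ i, (t i - s i)) :=
          (ENNReal.ofReal_sum_of_nonneg (fun i _ => sub_nonneg.mpr (hst i).2.1)).symm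
      _ < ENNReal.ofReal r := (ENNReal.ofReal_lt_ofReal_iff hr0').mpr hsum
      _ = (r : ℝ≥0∞) := ENNReal.ofReal_coe_nnreal
      _ < δ := hrδ
  calc ∑ i, |f (t i) - f (s i)| ≤ ∑ i, (L i).toReal := Finset.sum_le_sum (fun i _ => key i)
    _ = (∑ i, L i).toReal := (ENNReal.toReal_sum hLfin).symm
    _ < ε := by
        rw [hsum']
        exact ENNReal.toReal_lt_of_lt_ofReal (hδ _ hUmeas)

lemma rpowShiftIntegrable {r : ℝ} (hr : -1 < r) (x b : ℝ) :
    IntervalIntegrable (fun u => (u - x) ^ r) volume x b := by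
  have h := (intervalIntegral.intervalIntegrable_rpow' (a := 0) (b := b - x) hr).comp_sub_right x
  simpa using h

lemma rpowShiftIntegral {r : ℝ} (hr : -1 < r) (x t : ℝ) :
    ∫ u in x..t, (u - x) ^ r = (t - x) ^ (r + 1) / (r + 1) := by
  rw [intervalIntegral.integral_comp_sub_right (fun v => v ^ r) x, sub_self,
    integral_rpow (Or.inl hr), Real.zero_rpow (by linarith), sub_zero]

lemma lemmaB (a : ℝ) (y : ℝ → ℝ) (hy : IntegrableOn y (Set.Icc 0 a) volume)
    (α : ℝ) (hα : 1 < α) :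
    ∃ g : ℝ → ℝ, IntegrableOn g (Icc 0 a) volume ∧
      ∀ t ∈ Icc (0:ℝ) a, fracInt α y t = ∫ u in (0:ℝ)..t, g u := by
  have hα1 : (0:ℝ) < α - 1 := by linarith
  have hα1' : α - 1 ≠ 0 := ne_of_gt hα1
  have hα2 : (-1:ℝ) < α - 2 := by linarith
  set c : ℝ := 1 / Real.Gamma α with hc
  -- measurable representative of y
  set y' : ℝ → ℝ := (hy.aestronglyMeasurable).mk y with hy'def
  have hyy' : y =ᵐ[volume.restrict (Icc 0 a)] y' := hy.aestronglyMeasurable.ae_eq_mk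
  have hy'meas : Measurable y' := (hy.aestronglyMeasurable).stronglyMeasurable_mk.measurable
  have hy' : IntegrableOn y' (Icc 0 a) volume := (hy.congr hyy' : _)
  set νa := volume.restrict (Ioc (0:ℝ) a) with hνa
  set k : ℝ × ℝ → ℝ := fun p =>
    ({q : ℝ × ℝ | q.2 < q.1}.indicator (fun q => (q.1 - q.2) ^ (α - 2)) p) * y' p.2 with hk
  have hkmeas : Measurable k := by
    apply Measurable.mul
    · apply Measurable.indicator
      · measurability
      · exact measurableSet_lt measurable_snd measurable_fst
    · exact hy'meas.comp measurable_snd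
  -- evaluation of k on slices
  have hkslice1 : ∀ x : ℝ, (fun u => k (u, x)) =
      (Ioi x).indicator (fun u => (u - x) ^ (α - 2) * y' x) := by
    intro x; ext u
    by_cases h : x < u <;> simp [hk, Set.indicator_apply, h]
  have hkslice2 : ∀ u : ℝ, (fun x => k (u, x)) =
      (Iio u).indicator (fun x => (u - x) ^ (α - 2) * y' x) := by
    intro u; ext x
    by_cases h : x < u <;> simp [hk, Set.indicator_apply, h]
  -- restriction computations
  have hres1 : ∀ x ∈ Ioc (0:ℝ) a, νa.restrict (Ioi x) = volume.restrict (Ioc x a) := by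
    intro x hx
    rw [hνa, Measure.restrict_restrict measurableSet_Ioi]
    congr 1
    ext u
    constructor
    · rintro ⟨h1, _, h3⟩; exact ⟨h1, h3⟩
    · rintro ⟨h1, h2⟩; exact ⟨h1, lt_trans hx.1 h1, h2⟩
  -- integrability of k on the product
  have hslice_int : ∀ x ∈ Ioc (0:ℝ) a, Integrable (fun u => k (u, x)) νa := by
    intro x hx
    rw [hkslice1 x]
    rw [integrable_indicator_iff measurableSet_Ioi]
    have : IntegrableOn (fun u => (u - x) ^ (α - 2) * y' x) (Ioc x a) volume :=
      ((rpowShiftIntegrable hα2 x a).1).mul_const _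
    rw [IntegrableOn, hres1 x hx] at *
    exact this
  have hnormint : ∀ x ∈ Ioc (0:ℝ) a,
      ∫ u, ‖k (u, x)‖ ∂νa = (a - x) ^ (α - 1) / (α - 1) * |y' x| := by
    intro x hx
    have hexp : α - 2 + 1 = α - 1 := by ring
    have hfun : (fun u => ‖k (u, x)‖) =
        (Ioi x).indicator (fun u => (u - x) ^ (α - 2) * |y' x|) := by
      ext u
      have hval := congrFun (hkslice1 x) u
      by_cases h : x < u
      · rw [hval, Set.indicator_of_mem (mem_Ioi.mpr h), Set.indicator_of_mem (mem_Ioi.mpr h),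
          Real.norm_eq_abs, abs_mul, abs_of_nonneg (Real.rpow_nonneg (sub_nonneg.mpr h.le) _)]
      · rw [hval, Set.indicator_of_notMem (by simpa using h),
          Set.indicator_of_notMem (by simpa using h), norm_zero]
    rw [hfun, integral_indicator measurableSet_Ioi, hres1 x hx,
      ← intervalIntegral.integral_of_le hx.2 (μ := volume), intervalIntegral.integral_mul_const,
      rpowShiftIntegral hα2, hexp]
  have hk_int : Integrable k (νa.prod νa) := by
    refine (integrable_prod_iff' hkmeas.aestronglyMeasurable).2 ⟨?_, ?_⟩
    · filter_upwards [ae_restrict_mem measurableSet_Ioc] with x hx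
      exact hslice_int x hx
    · refine Integrable.mono' (g := fun x => a ^ (α - 1) / (α - 1) * |y' x|)
        (((hy'.mono_set Ioc_subset_Icc_self).abs.const_mul _ : _))
        (hkmeas.stronglyMeasurable.norm.integral_prod_left').aestronglyMeasurable ?_
      filter_upwards [ae_restrict_mem measurableSet_Ioc] with x hx
      have hnn : 0 ≤ (a - x) ^ (α - 1) / (α - 1) * |y' x| :=
        mul_nonneg (div_nonneg (Real.rpow_nonneg (by linarith [hx.2]) _) hα1.le) (abs_nonneg _)
      rw [Real.norm_eq_abs, hnormint x hx, abs_of_nonneg hnn]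
      have h1 : (a - x) ^ (α - 1) ≤ a ^ (α - 1) :=
        Real.rpow_le_rpow (by linarith [hx.2]) (by linarith [hx.1]) (le_of_lt hα1)
      have h2 : 0 ≤ |y' x| := abs_nonneg _
      exact mul_le_mul_of_nonneg_right (by gcongr) h2

  -- the candidate derivative g
  set g : ℝ → ℝ := fun u => (c * (α - 1)) * ∫ x, k (u, x) ∂νa with hg
  have hg_int : IntegrableOn g (Icc 0 a) volume := by
    rw [integrableOn_Icc_iff_integrableOn_Ioc]
    exact (hk_int.integral_prod_left.const_mul _ : _)
  refine ⟨g, hg_int, ?_⟩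
  intro t ht
  rcases eq_or_lt_of_le ht.1 with hteq | h0t
  · rw [← hteq]
    simp [fracInt, intervalIntegral.integral_same]
  set νt := volume.restrict (Ioc (0:ℝ) t) with hνt
  have hsubIcc : Ioc (0:ℝ) t ⊆ Icc (0:ℝ) a := fun x hx =>
    ⟨le_of_lt hx.1, le_trans hx.2 ht.2⟩
  -- inner slice integral over any Ioc 0 b with u ≤ b
  have hinner : ∀ b : ℝ, ∀ u ∈ Ioc (0:ℝ) b,
      ∫ x, k (u, x) ∂(volume.restrict (Ioc 0 b)) =
        ∫ x in Ioo (0:ℝ) u, (u - x) ^ (α - 2) * y' x := by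
    intro b u hu
    have hset : Iio u ∩ Ioc (0:ℝ) b = Ioo 0 u := by
      ext x
      simp only [mem_inter_iff, mem_Iio, mem_Ioc, mem_Ioo]
      constructor
      · rintro ⟨h1, h2, h3⟩; exact ⟨h2, h1⟩
      · rintro ⟨h1, h2⟩; exact ⟨h2, h1, le_trans h2.le hu.2⟩
    rw [hkslice2 u, integral_indicator measurableSet_Iio,
      Measure.restrict_restrict measurableSet_Iio, hset]
  have hgt : ∀ u ∈ Ioc (0:ℝ) t, g u = (c * (α - 1)) * ∫ x, k (u, x) ∂νt := by
    intro u hu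
    have h1 := hinner a u ⟨hu.1, le_trans hu.2 ht.2⟩
    have h2 := hinner t u hu
    show c * (α - 1) * ∫ x in Ioc (0:ℝ) a, k (u, x) =
      c * (α - 1) * ∫ x in Ioc (0:ℝ) t, k (u, x)
    rw [h1, h2]
  have hkt_int : Integrable k (νt.prod νt) := by
    rw [hνt, Measure.prod_restrict]
    rw [hνa, Measure.prod_restrict] at hk_int
    exact IntegrableOn.mono_set hk_int
      (Set.prod_mono (Ioc_subset_Ioc_right ht.2) (Ioc_subset_Ioc_right ht.2))
  have hres2 : ∀ x ∈ Ioc (0:ℝ) t, νt.restrict (Ioi x) = volume.restrict (Ioc x t) := by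
    intro x hx
    rw [hνt, Measure.restrict_restrict measurableSet_Ioi]
    congr 1
    ext u
    simp only [mem_inter_iff, mem_Ioi, mem_Ioc]
    constructor
    · rintro ⟨h1, _, h3⟩; exact ⟨h1, h3⟩
    · rintro ⟨h1, h2⟩; exact ⟨h1, lt_trans hx.1 h1, h2⟩
  have hexp : α - 2 + 1 = α - 1 := by ring
  have e4 : ∀ x ∈ Ioc (0:ℝ) t, ∫ u, k (u, x) ∂νt = (t - x) ^ (α - 1) / (α - 1) * y' x := by
    intro x hx
    rw [hkslice1 x, integral_indicator measurableSet_Ioi, hres2 x hx,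
      ← intervalIntegral.integral_of_le hx.2 (μ := volume),
      intervalIntegral.integral_mul_const, rpowShiftIntegral hα2, hexp]
  have e3 : ∫ u, (∫ x, k (u, x) ∂νt) ∂νt = ∫ x, (∫ u, k (u, x) ∂νt) ∂νt := by
    exact integral_integral_swap (f := fun u x => k (u, x)) hkt_int
  have main : ∫ u in (0:ℝ)..t, g u = fracInt α y t := by
    calc ∫ u in (0:ℝ)..t, g u = ∫ u, g u ∂νt := by
          rw [intervalIntegral.integral_of_le ht.1]
      _ = ∫ u, (c * (α - 1)) * (∫ x, k (u, x) ∂νt) ∂νt :=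
          setIntegral_congr_fun measurableSet_Ioc (fun u hu => hgt u hu)
      _ = (c * (α - 1)) * ∫ u, (∫ x, k (u, x) ∂νt) ∂νt := integral_const_mul _ _
      _ = (c * (α - 1)) * ∫ x, (∫ u, k (u, x) ∂νt) ∂νt := by rw [e3]
      _ = (c * (α - 1)) * ∫ x in Ioc (0:ℝ) t, (t - x) ^ (α - 1) / (α - 1) * y' x := by
          congr 1
          exact setIntegral_congr_fun measurableSet_Ioc (fun x hx => e4 x hx)
      _ = c * ∫ x in Ioc (0:ℝ) t, (t - x) ^ (α - 1) * y' x := by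
          rw [mul_assoc, ← integral_const_mul]
          congr 1
          refine setIntegral_congr_fun measurableSet_Ioc (fun x _ => ?_)
          field_simp
      _ = c * ∫ x in Ioc (0:ℝ) t, (t - x) ^ (α - 1) * y x := by
          congr 1
          refine integral_congr_ae ?_
          have h := hyy'.symm.filter_mono (ae_mono (Measure.restrict_mono hsubIcc le_rfl))
          filter_upwards [h] with x hx
          rw [hx]
      _ = c * ∫ x in (0:ℝ)..t, (t - x) ^ (α - 1) * y x := by
          rw [intervalIntegral.integral_of_le ht.1]
      _ = fracInt α y t := rfl
  exact main.symm

theorem fracInt_absolutelyContinuous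
    (a : ℝ) (ha : 0 < a) (y : ℝ → ℝ)
    (hy : IntegrableOn y (Set.Icc 0 a) volume)
    (α : ℝ) (hα : 1 ≤ α) :
    AbsolutelyContinuousOnI (fracInt α y) 0 a := by
  rcases eq_or_lt_of_le hα with rfl | hα1
  · refine lemmaA a y _ hy (fun t ht => ?_)
    simp [fracInt, Real.Gamma_one, Real.rpow_zero]
  · obtain ⟨g, hgInt, hgEq⟩ := lemmaB a y hy α hα1
    exact lemmaA a g _ hgInt hgEq
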